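/- For a vector field γ(x,y,z) = (φ̂₁(z)γ₁ₓ + φ̂₃(z)γ₃ₓ, φ̂₁(z)γ₁ᵧ + φ̂₃(z)γ₃ᵧ, φ₀(z)γ₀ + φ₂(z)γ₂) with φ̂₁' = φ₀ and φ̂₃' = φ₂, the curl is (φ₀(∂ᵧγ₀ − γ₁ᵧ) + φ₂(∂ᵧγ₂ − γ₃ᵧ), φ₀(γ₁ₓ − ∂ₓγ₀) + φ₂(γ₃ₓ − ∂ₓγ₂), φ̂₁·curl₂D γ₁ + φ̂₃·curl₂D γ₃). -/

import Mathlib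

/-- 2D rotation of a planar vector field. -/
noncomputable def curl2D (V : ℝ × ℝ → ℝ × ℝ) (x y : ℝ) : ℝ :=
  deriv (fun x' => (V (x', y)).2) x - deriv (fun y' => (V (x, y')).1) y

/-- Curl of the equilibrated-flux ansatz
γ(x,y,z) = (φhat₁γ₁ₓ + φhat₃γ₃ₓ, φhat₁γ₁ᵧ + φhat₃γ₃ᵧ, φ₀γ₀ + φ₂γ₂) with φhat₁' = φ₀, φhat₃' = φ₂. -/
theorem stmt10 (φ₀ φ₂ φhat₁ φhat₃ : ℝ → ℝ)
    (hφ₀ : ContDiff ℝ 1 φ₀) (hφ₂ : ContDiff ℝ 1 φ₂)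
    (hφhat₁ : ContDiff ℝ 1 φhat₁) (hφhat₃ : ContDiff ℝ 1 φhat₃)
    (hd₁ : ∀ z, deriv φhat₁ z = φ₀ z) (hd₃ : ∀ z, deriv φhat₃ z = φ₂ z)
    (γ₀ γ₂ : ℝ × ℝ → ℝ) (γ₁ γ₃ : ℝ × ℝ → ℝ × ℝ)
    (hγ₀ : ContDiff ℝ 1 γ₀) (hγ₂ : ContDiff ℝ 1 γ₂)
    (hγ₁ : ContDiff ℝ 1 γ₁) (hγ₃ : ContDiff ℝ 1 γ₃)
    (Fx Fy Fz : ℝ → ℝ → ℝ → ℝ)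
    (hFx : Fx = fun x y z => φhat₁ z * (γ₁ (x, y)).1 + φhat₃ z * (γ₃ (x, y)).1)
    (hFy : Fy = fun x y z => φhat₁ z * (γ₁ (x, y)).2 + φhat₃ z * (γ₃ (x, y)).2)
    (hFz : Fz = fun x y z => φ₀ z * γ₀ (x, y) + φ₂ z * γ₂ (x, y)) :
    ∀ x y z : ℝ,
      (deriv (fun y' => Fz x y' z) y - deriv (fun z' => Fy x y z') z
        = φ₀ z * (deriv (fun y' => γ₀ (x, y')) y - (γ₁ (x, y)).2)
          + φ₂ z * (deriv (fun y' => γ₂ (x, y')) y - (γ₃ (x, y)).2)) ∧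
      (deriv (fun z' => Fx x y z') z - deriv (fun x' => Fz x' y z) x
        = φ₀ z * ((γ₁ (x, y)).1 - deriv (fun x' => γ₀ (x', y)) x)
          + φ₂ z * ((γ₃ (x, y)).1 - deriv (fun x' => γ₂ (x', y)) x)) ∧
      (deriv (fun x' => Fy x' y z) x - deriv (fun y' => Fx x y' z) y
        = φhat₁ z * curl2D γ₁ x y + φhat₃ z * curl2D γ₃ x y) := by
  subst hFx hFy hFz
  intro x y z
  have dmix : ∀ (a b : ℝ) (f g : ℝ → ℝ) (t : ℝ), DifferentiableAt ℝ f t →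
      DifferentiableAt ℝ g t →
      deriv (fun s => a * f s + b * g s) t = a * deriv f t + b * deriv g t := by
    intro a b f g t hf hg
    rw [deriv_fun_add (hf.const_mul a) (hg.const_mul b), deriv_const_mul a hf, deriv_const_mul b hg]
  have dmix' : ∀ (a b : ℝ) (f g : ℝ → ℝ) (t : ℝ), DifferentiableAt ℝ f t →
      DifferentiableAt ℝ g t →
      deriv (fun s => f s * a + g s * b) t = deriv f t * a + deriv g t * b := by
    intro a b f g t hf hg
    rw [deriv_fun_add (hf.mul_const a) (hg.mul_const b), deriv_mul_const hf, deriv_mul_const hg]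
  have sy : ∀ (g : ℝ × ℝ → ℝ), ContDiff ℝ 1 g → DifferentiableAt ℝ (fun y' => g (x, y')) y := by
    intro g hg
    exact (hg.differentiable one_ne_zero (x, y)).comp y
      ((differentiableAt_const x).prodMk differentiableAt_id)
  have sx : ∀ (g : ℝ × ℝ → ℝ), ContDiff ℝ 1 g → DifferentiableAt ℝ (fun x' => g (x', y)) x := by
    intro g hg
    exact (hg.differentiable one_ne_zero (x, y)).comp x
      (differentiableAt_id.prodMk (differentiableAt_const y))
  have hφd₁ := hφhat₁.differentiable one_ne_zero z
  have hφd₃ := hφhat₃.differentiable one_ne_zero z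
  refine ⟨?_, ?_, ?_⟩
  · rw [dmix _ _ _ _ _ (sy _ hγ₀) (sy _ hγ₂),
      dmix' _ _ _ _ _ hφd₁ hφd₃, hd₁, hd₃]
    ring
  · rw [dmix _ _ _ _ _ (sx _ hγ₀) (sx _ hγ₂),
      dmix' _ _ _ _ _ hφd₁ hφd₃, hd₁, hd₃]
    ring
  · beta_reduce
    rw [dmix _ _ _ _ _ (sx _ hγ₁.snd) (sx _ hγ₃.snd),
      dmix _ _ _ _ _ (sy _ hγ₁.fst) (sy _ hγ₃.fst)]
    unfold curl2D
    ring
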